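/- For every real x ≥ 1, Γ(x) ≤ x^{(2x−1)/2} e^{1−x}, i.e., Γ(p/2) ≤ (p/2)^{(p−1)/2} e^{1−p/2} for p ≥ 2. -/

import Mathlib

open Real Set

lemma lemAu {u : ℝ} (hu : 0 ≤ u) : 2 * u / (2 + u) ≤ Real.log (1 + u) := by
  set g : ℝ → ℝ := fun u => Real.log (1 + u) - 2 * u / (2 + u) with hg
  rcases eq_or_lt_of_le hu with h | h
  · simp [← h]
  · have hmono : StrictMonoOn g (Ici (0:ℝ)) := by
      apply strictMonoOn_of_deriv_pos (convex_Ici 0)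
      · apply ContinuousOn.sub
        · apply ContinuousOn.log (by fun_prop)
          intro x hx; simp only [mem_Ici] at hx; positivity
        · apply ContinuousOn.div (by fun_prop) (by fun_prop)
          intro x hx; simp only [mem_Ici] at hx; positivity
      · intro x hx
        rw [interior_Ici, mem_Ioi] at hx
        have h1 : (1:ℝ) + x ≠ 0 := by positivity
        have h2 : (2:ℝ) + x ≠ 0 := by positivity
        have hd : HasDerivAt g (1 / (1 + x) - (2 * (2 + x) - 2 * x * 1) / (2 + x) ^ 2) x := by
          apply HasDerivAt.sub
          · simpa using (((hasDerivAt_id x).const_add 1).log h1)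
          · have := ((hasDerivAt_id x).const_mul 2).div ((hasDerivAt_id x).const_add 2) h2
            simpa [Pi.div_def] using this
        rw [hd.deriv]
        rw [div_sub_div _ _ h1 (pow_ne_zero 2 h2), lt_div_iff₀ (by positivity)]
        nlinarith [sq_nonneg x]
    have h0 : g 0 < g u := hmono self_mem_Ici (mem_Ici.mpr hu) h
    simp only [hg] at h0
    norm_num at h0
    linarith

lemma lemBu {u : ℝ} (hu : 0 ≤ u) : Real.log (1 + u) ≤ u * (2 + u) / (2 * (1 + u)) := by
  set g : ℝ → ℝ := fun u => u * (2 + u) / (2 * (1 + u)) - Real.log (1 + u) with hg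
  rcases eq_or_lt_of_le hu with h | h
  · simp [← h]
  · have hmono : StrictMonoOn g (Ici (0:ℝ)) := by
      apply strictMonoOn_of_deriv_pos (convex_Ici 0)
      · apply ContinuousOn.sub
        · apply ContinuousOn.div (by fun_prop) (by fun_prop)
          intro x hx; simp only [mem_Ici] at hx; positivity
        · apply ContinuousOn.log (by fun_prop)
          intro x hx; simp only [mem_Ici] at hx; positivity
      · intro x hx
        rw [interior_Ici, mem_Ioi] at hx
        have h1 : (1:ℝ) + x ≠ 0 := by positivity
        have h2 : 2 * ((1:ℝ) + x) ≠ 0 := by positivity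
        have hd : HasDerivAt g
            (((1 * (2 + x) + x * 1) * (2 * (1 + x)) - x * (2 + x) * (2 * 1)) / (2 * (1 + x)) ^ 2
              - 1 / (1 + x)) x := by
          apply HasDerivAt.sub
          · have := ((hasDerivAt_id x).mul ((hasDerivAt_id x).const_add 2)).div
              (((hasDerivAt_id x).const_add 1).const_mul 2) h2
            simpa [Pi.div_def, Pi.mul_def] using this
          · simpa using (((hasDerivAt_id x).const_add 1).log h1)
        rw [hd.deriv]
        rw [div_sub_div _ _ (pow_ne_zero 2 h2) h1, lt_div_iff₀ (by positivity)]
        nlinarith [sq_nonneg x, sq_nonneg (1+x)]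
    have h0 : g 0 < g u := hmono self_mem_Ici (mem_Ici.mpr hu) h
    simp only [hg] at h0
    norm_num at h0
    linarith

/-- midpoint inequality -/
lemma lemA {a b : ℝ} (ha : 0 < a) (hab : a ≤ b) :
    2 * (b - a) / (a + b) ≤ Real.log b - Real.log a := by
  have hb : 0 < b := lt_of_lt_of_le ha hab
  have hu : 0 ≤ (b - a) / a := div_nonneg (by linarith) ha.le
  have key := lemAu hu
  have h1 : 1 + (b - a) / a = b / a := by field_simp; ring
  have hden : 2 + (b - a) / a = (a + b) / a := by field_simp; ring
  have h2 : 2 * ((b - a) / a) / (2 + (b - a) / a) = 2 * (b - a) / (a + b) := by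
    rw [hden, div_eq_div_iff (by positivity) (by positivity)]
    field_simp [ha.ne']
  rw [h1, h2, Real.log_div hb.ne' ha.ne'] at key
  linarith

/-- trapezoid inequality -/
lemma lemB {a b : ℝ} (ha : 0 < a) (hab : a ≤ b) :
    Real.log b - Real.log a ≤ (b - a) * (a + b) / (2 * (a * b)) := by
  have hb : 0 < b := lt_of_lt_of_le ha hab
  have hu : 0 ≤ (b - a) / a := div_nonneg (by linarith) ha.le
  have key := lemBu hu
  have h1 : 1 + (b - a) / a = b / a := by field_simp; ring
  have h2 : (b - a) / a * (2 + (b - a) / a) / (2 * (1 + (b - a) / a))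
      = (b - a) * (a + b) / (2 * (a * b)) := by
    rw [h1, div_eq_div_iff (by positivity) (by positivity)]
    field_simp
    ring
  rw [h2] at key
  rw [h1, Real.log_div hb.ne' ha.ne'] at key
  linarith

noncomputable def Fg (x : ℝ) : ℝ := Real.log (Real.Gamma x) - (x - 1/2) * Real.log x + x - 1

noncomputable def del (t : ℝ) : ℝ := (t + 1/2) * (Real.log (t+1) - Real.log t) - 1

lemma logGamma_add_one {t : ℝ} (ht : 0 < t) :
    Real.log (Real.Gamma (t+1)) = Real.log (Real.Gamma t) + Real.log t := by
  rw [Real.Gamma_add_one ht.ne', Real.log_mul ht.ne' (Real.Gamma_pos_of_pos ht).ne', add_comm]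

lemma Fg_step {t : ℝ} (ht : 0 < t) : Fg t - Fg (t+1) = del t := by
  unfold Fg del
  rw [logGamma_add_one ht]
  ring

lemma del_nonneg {t : ℝ} (ht : 1 ≤ t) : 0 ≤ del t := by
  have h := lemA (a := t) (b := t+1) (by linarith) (by linarith)
  have e1 : 2 * ((t+1) - t) / (t + (t+1)) = 2 / (2*t+1) := by norm_num; ring_nf
  rw [e1] at h
  have e2 : 2 / (2*t+1) * (t + 1/2) = 1 := by field_simp
  unfold del
  nlinarith [h, e2]

lemma del_deriv {t : ℝ} (ht : 0 < t) :
    HasDerivAt del (1 * (Real.log (t+1) - Real.log t) + (t + 1/2) * (1/(t+1) - 1/t)) t := by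
  have h1 : HasDerivAt (fun x : ℝ => x + 1/2) 1 t := by
    simpa using (hasDerivAt_id t).add_const (1/2 : ℝ)
  have h2 : HasDerivAt (fun x : ℝ => Real.log (x+1) - Real.log x) (1/(t+1) - 1/t) t := by
    apply HasDerivAt.sub
    · simpa using ((hasDerivAt_id t).add_const (1:ℝ)).log (by positivity)
    · simpa using (hasDerivAt_id t).log ht.ne'
  exact (h1.mul h2).sub_const 1


lemma del_anti : AntitoneOn del (Ici (1:ℝ)) := by
  apply antitoneOn_of_deriv_nonpos (convex_Ici 1)
  · apply ContinuousOn.sub _ continuousOn_const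
    apply ContinuousOn.mul (by fun_prop)
    apply ContinuousOn.sub
    · apply ContinuousOn.log (by fun_prop)
      intro x hx; simp only [mem_Ici] at hx; positivity
    · apply ContinuousOn.log (by fun_prop)
      intro x hx; simp only [mem_Ici] at hx; positivity
  · intro x hx
    rw [interior_Ici, mem_Ioi] at hx
    exact (del_deriv (by linarith)).differentiableAt.differentiableWithinAt
  · intro x hx
    rw [interior_Ici, mem_Ioi] at hx
    have hx0 : (0:ℝ) < x := by linarith
    rw [(del_deriv hx0).deriv]
    have h := lemB (a := x) (b := x+1) hx0 (by linarith)
    have e1 : ((x+1) - x) * (x + (x+1)) / (2 * (x * (x+1))) = (2*x+1)/(2*x*(x+1)) := by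
      norm_num; ring_nf
    rw [e1] at h
    have e2 : (x + 1/2) * (1/(x+1) - 1/x) = -((2*x+1)/(2*x*(x+1))) := by
      field_simp; ring
    rw [e2]
    linarith

lemma Fg_succ_le {t : ℝ} (ht : 1 ≤ t) : Fg (t+1) ≤ Fg t := by
  have h1 := Fg_step (t := t) (by linarith)
  have h2 := del_nonneg ht
  linarith

lemma lemE : ∀ (j : ℕ), ∀ {y : ℝ}, 1 ≤ y → Fg (y + j) ≤ Fg y := by
  intro j
  induction j with
  | zero => intro y hy; simp
  | succ n ih =>
    intro y hy
    have h1 : y + ((n+1 : ℕ):ℝ) = (y + n) + 1 := by push_cast; ring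
    rw [h1]
    have h2 : (1:ℝ) ≤ y + n := by
      have : (0:ℝ) ≤ n := Nat.cast_nonneg n
      linarith
    exact le_trans (Fg_succ_le h2) (ih hy)

lemma lemD : ∀ (k : ℕ), ∀ {x : ℝ}, 1 ≤ x → Fg x - Fg (x + k) ≤ Fg 1 - Fg (1 + k) := by
  intro k
  induction k with
  | zero => intro x hx; simp
  | succ n ih =>
    intro x hx
    have hn : (0:ℝ) ≤ n := Nat.cast_nonneg n
    have e1 : x + ((n+1 : ℕ):ℝ) = (x + n) + 1 := by push_cast; ring
    have e2 : (1:ℝ) + ((n+1 : ℕ):ℝ) = ((1 + n) + 1 : ℝ) := by push_cast; ring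
    rw [e1, e2]
    have s1 := Fg_step (t := x + n) (by linarith)
    have s2 := Fg_step (t := 1 + (n:ℝ)) (by linarith)
    have hmono := del_anti (mem_Ici.mpr (by linarith : (1:ℝ) ≤ 1 + (n:ℝ)))
      (mem_Ici.mpr (by linarith : (1:ℝ) ≤ x + (n:ℝ))) (by linarith)
    have := ih hx
    have e3 : x + ((n : ℕ):ℝ) = x + (n:ℝ) := by norm_num
    have e4 : (1:ℝ) + ((n : ℕ):ℝ) = 1 + (n:ℝ) := by norm_num
    rw [e3, e4] at this
    linarith

lemma lemC {m : ℕ} (hm : m ≠ 0) {s : ℝ} (hs : 0 < s) (hs1 : s ≤ 1) :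
    Fg ((m:ℝ) + s) ≤ Fg (m:ℝ) + 1/(2*(m:ℝ)) := by
  have hm1 : (1:ℝ) ≤ (m:ℝ) := by exact_mod_cast Nat.one_le_iff_ne_zero.mpr hm
  have hm0 : (0:ℝ) < (m:ℝ) := by linarith
  have hms : (0:ℝ) < (m:ℝ) + s := by linarith
  have hfeq : ∀ {y : ℝ}, 0 < y →
      (Real.log ∘ Real.Gamma) (y + 1) = (Real.log ∘ Real.Gamma) y + Real.log y := by
    intro y hy
    simpa [Function.comp] using logGamma_add_one hy
  have key := Real.BohrMollerup.f_add_nat_le (f := Real.log ∘ Real.Gamma)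
    Real.convexOn_log_Gamma hfeq hm hs hs1
  simp only [Function.comp_apply] at key
  -- log (m+s) - log m ≥ s/(m+s)
  have hlog : s / ((m:ℝ) + s) ≤ Real.log ((m:ℝ) + s) - Real.log (m:ℝ) := by
    have h0 : (0:ℝ) < (m:ℝ) / ((m:ℝ) + s) := by positivity
    have h1 := Real.log_le_sub_one_of_pos h0
    rw [Real.log_div hm0.ne' hms.ne'] at h1
    have e : (m:ℝ) / ((m:ℝ) + s) - 1 = -(s/((m:ℝ)+s)) := by field_simp; ring
    rw [e] at h1
    linarith
  have hc : (0:ℝ) ≤ (m:ℝ) + s - 1/2 := by linarith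
  have hmul : ((m:ℝ) + s - 1/2) * (s/((m:ℝ)+s)) ≤
      ((m:ℝ) + s - 1/2) * (Real.log ((m:ℝ) + s) - Real.log (m:ℝ)) :=
    mul_le_mul_of_nonneg_left hlog hc
  have hq : s - ((m:ℝ) + s - 1/2) * (s/((m:ℝ)+s)) ≤ 1/(2*(m:ℝ)) := by
    have e : s - ((m:ℝ) + s - 1/2) * (s/((m:ℝ)+s)) = s/(2*((m:ℝ)+s)) := by
      field_simp; ring
    rw [e, div_le_div_iff₀ (by positivity) (by positivity)]
    nlinarith
  unfold Fg
  nlinarith [key, hmul, hq]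

lemma Fg_one : Fg 1 = 0 := by
  unfold Fg
  simp [Real.Gamma_one]

lemma Fg_nonpos {x : ℝ} (hx : 1 ≤ x) : Fg x ≤ 0 := by
  set m₀ : ℕ := Nat.floor x with hm₀def
  have hm₀ : 1 ≤ m₀ := Nat.le_floor (by exact_mod_cast hx)
  have hm₀R : (1:ℝ) ≤ (m₀:ℝ) := by exact_mod_cast hm₀
  have hfl : (m₀:ℝ) ≤ x := Nat.floor_le (by linarith)
  have hs1 : x - m₀ < 1 := by
    have := Nat.lt_floor_add_one x
    linarith
  rcases eq_or_lt_of_le (sub_nonneg.mpr hfl) with hs | hs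
  · -- x is the integer m₀
    have hxm : x = (m₀:ℝ) := by linarith
    have h := lemE (m₀ - 1) (le_refl (1:ℝ))
    have hcast : (1:ℝ) + ((m₀ - 1 : ℕ):ℝ) = (m₀:ℝ) := by
      rw [Nat.cast_sub hm₀]; push_cast; ring
    rw [hcast] at h
    rw [hxm, ← Fg_one]
    exact h
  · have key : ∀ n : ℕ, Fg x ≤ 1/(2*((m₀:ℝ)+(n:ℝ))) := by
      intro n
      have h1 : Fg x - Fg (x + n) ≤ Fg 1 - Fg (1 + n) := lemD n hx
      have e2 : x + (n:ℝ) = ((m₀ + n : ℕ):ℝ) + (x - m₀) := by push_cast; ring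
      have h3 : Fg (((m₀ + n : ℕ):ℝ) + (x - m₀)) ≤ Fg ((m₀ + n : ℕ):ℝ) + 1/(2*((m₀+n:ℕ):ℝ)) :=
        lemC (by omega) hs hs1.le
      have h4 : Fg ((m₀ + n : ℕ):ℝ) ≤ Fg (1 + n) := by
        have h := lemE (m₀ - 1) (y := 1 + (n:ℝ)) (by simp [Nat.cast_nonneg])
        have hcast : (1:ℝ) + (n:ℝ) + ((m₀ - 1 : ℕ):ℝ) = ((m₀ + n : ℕ):ℝ) := by
          rw [Nat.cast_sub hm₀]; push_cast; ring
        rwa [hcast] at h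
      have e5 : ((m₀+n:ℕ):ℝ) = (m₀:ℝ) + (n:ℝ) := by push_cast; ring
      rw [e2, e5] at h1
      rw [e5] at h3 h4
      rw [Fg_one] at h1
      linarith
    by_contra hpos
    push_neg at hpos
    obtain ⟨n, hn⟩ := exists_nat_gt (1/(2*Fg x))
    have hk := key n
    have hn0 : (0:ℝ) ≤ n := Nat.cast_nonneg n
    have h2F : 0 < 2 * Fg x := by linarith
    rw [div_lt_iff₀ h2F] at hn
    rw [le_div_iff₀ (by positivity)] at hk
    nlinarith [hk, hn, mul_pos hpos (show (0:ℝ) < (m₀:ℝ) by linarith)]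

/-- Gamma function bound: `Γ(x) ≤ x^{(2x−1)/2} e^{1−x}` for `x ≥ 1`; equivalently
`Γ(p/2) ≤ (p/2)^{(p−1)/2} e^{1−p/2}` for `p ≥ 2`. -/
theorem stmt12 :
    (∀ x : ℝ, 1 ≤ x → Real.Gamma x ≤ x ^ ((2 * x - 1) / 2) * Real.exp (1 - x))
      ∧ (∀ p : ℝ, 2 ≤ p →
        Real.Gamma (p / 2) ≤ (p / 2) ^ ((p - 1) / 2) * Real.exp (1 - p / 2)) := by
  have main : ∀ x : ℝ, 1 ≤ x → Real.Gamma x ≤ x ^ ((2 * x - 1) / 2) * Real.exp (1 - x) := by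
    intro x hx
    have hx0 : (0:ℝ) < x := by linarith
    have hF := Fg_nonpos hx
    unfold Fg at hF
    rw [show Real.Gamma x = Real.exp (Real.log (Real.Gamma x)) from
      (Real.exp_log (Real.Gamma_pos_of_pos hx0)).symm,
      Real.rpow_def_of_pos hx0, ← Real.exp_add]
    apply Real.exp_le_exp.mpr
    have e : (2*x-1)/2 * Real.log x = (x - 1/2) * Real.log x := by ring
    linarith [e.le, e.ge]
  refine ⟨main, fun p hp => ?_⟩
  have h := main (p/2) (by linarith)
  have e : (2 * (p/2) - 1) / 2 = (p - 1) / 2 := by ring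
  rwa [e] at h
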